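/- Let p be an extreme point of the closed unit ball of a normed real vector space (X, ‖·‖). If p = p₁ + p₂ with ‖p‖ = ‖p₁‖ + ‖p₂‖, then both p₁ and p₂ are scalar multiples of p. -/

import Mathlib

theorem stmt6 {X : Type*} [NormedAddCommGroup X] [NormedSpace ℝ X]
    (p p₁ p₂ : X) (hp : p ∈ Set.extremePoints ℝ (Metric.closedBall (0:X) 1))
    (hsum : p = p₁ + p₂) (hnorm : ‖p‖ = ‖p₁‖ + ‖p₂‖) :
    (∃ s : ℝ, p₁ = s • p) ∧ (∃ t : ℝ, p₂ = t • p) := by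
  obtain ⟨hpball, hext⟩ := hp
  by_cases hp0 : p = 0
  · subst hp0
    have h0 : ‖p₁‖ = 0 ∧ ‖p₂‖ = 0 := by
      constructor <;> nlinarith [norm_nonneg p₁, norm_nonneg p₂, norm_zero (E := X)]
    refine ⟨⟨0, ?_⟩, ⟨0, ?_⟩⟩ <;> simp [norm_eq_zero.mp h0.1, norm_eq_zero.mp h0.2]
  · have hple : ‖p‖ ≤ 1 := by simpa using hpball
    have hppos : 0 < ‖p‖ := norm_pos_iff.mpr hp0
    have hp1 : ‖p‖ = 1 := by
      by_contra h
      have hlt : ‖p‖ < 1 := lt_of_le_of_ne hple h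
      have hmem : (0 : X) ∈ Metric.closedBall (0:X) 1 := by simp
      have hb : ‖p‖⁻¹ • p ∈ Metric.closedBall (0:X) 1 := by
        simp [norm_smul, abs_of_pos (inv_pos.mpr hppos), inv_mul_cancel₀ hppos.ne']
      have hseg : p ∈ openSegment ℝ (0:X) (‖p‖⁻¹ • p) := by
        refine ⟨1 - ‖p‖, ‖p‖, by linarith, hppos, by ring, ?_⟩
        simp [smul_smul, mul_inv_cancel₀ hppos.ne']
      exact hp0 (hext hmem hb hseg).symm
    by_cases h1 : p₁ = 0
    · subst h1
      exact ⟨⟨0, by simp⟩, ⟨1, by simpa using hsum.symm⟩⟩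
    by_cases h2 : p₂ = 0
    · subst h2
      exact ⟨⟨1, by simpa using hsum.symm⟩, ⟨0, by simp⟩⟩
    have h1p : 0 < ‖p₁‖ := norm_pos_iff.mpr h1
    have h2p : 0 < ‖p₂‖ := norm_pos_iff.mpr h2
    have ha : ‖p₁‖⁻¹ • p₁ ∈ Metric.closedBall (0:X) 1 := by
      simp [norm_smul, abs_of_pos (inv_pos.mpr h1p), inv_mul_cancel₀ h1p.ne']
    have hb : ‖p₂‖⁻¹ • p₂ ∈ Metric.closedBall (0:X) 1 := by
      simp [norm_smul, abs_of_pos (inv_pos.mpr h2p), inv_mul_cancel₀ h2p.ne']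
    have hseg : p ∈ openSegment ℝ (‖p₁‖⁻¹ • p₁) (‖p₂‖⁻¹ • p₂) := by
      refine ⟨‖p₁‖, ‖p₂‖, h1p, h2p, by linarith [hnorm, hp1], ?_⟩
      rw [smul_smul, smul_smul, mul_inv_cancel₀ h1p.ne', mul_inv_cancel₀ h2p.ne',
        one_smul, one_smul, hsum]
    have hA := hext ha hb hseg
    have hB := hext hb ha (by rw [openSegment_symm]; exact hseg)
    refine ⟨⟨‖p₁‖, ?_⟩, ⟨‖p₂‖, ?_⟩⟩
    · rw [← hA, smul_smul, mul_inv_cancel₀ h1p.ne', one_smul]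
    · rw [← hB, smul_smul, mul_inv_cancel₀ h2p.ne', one_smul]
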